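/- The affine Hermitian curve y^q + y = x^{q+1} over GF(q^2) has exactly q^3 points; that is, the number of pairs (x,y) in GF(q^2)^2 satisfying y^q + y = x^{q+1} equals q^3. -/
import Mathlib

open Polynomial

/-- Number of roots of a nonzero polynomial over a finite field is at most its degree. -/
lemma aux_card_isRoot_le {F : Type*} [Field F] [Fintype F] (P : Polynomial F) (hP : P ≠ 0) :
    Nat.card {a : F // P.IsRoot a} ≤ P.natDegree := by
  classical
  have h : (Finset.univ.filter fun a : F => P.IsRoot a) ⊆ P.roots.toFinset := by
    intro a ha
    rw [Finset.mem_filter] at ha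
    rw [Multiset.mem_toFinset, Polynomial.mem_roots hP]
    exact ha.2
  calc Nat.card {a : F // P.IsRoot a}
      = (Finset.univ.filter fun a : F => P.IsRoot a).card := by
        rw [Nat.card_eq_fintype_card, Fintype.card_subtype]
    _ ≤ P.roots.toFinset.card := Finset.card_le_card h
    _ ≤ Multiset.card P.roots := Multiset.toFinset_card_le _
    _ ≤ P.natDegree := Polynomial.card_roots' P

/-- The affine Hermitian curve `y^q + y = x^(q+1)` over `GF(q^2)` has exactly `q^3` points. -/
theorem hermitian_curve_point_count
    (p m q : ℕ) (hp : p.Prime) (hm : 1 ≤ m) (hq : q = p ^ m)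
    (F : Type*) [Field F] [Fintype F] (hF : Fintype.card F = q ^ 2) :
    Nat.card {v : F × F // v.2 ^ q + v.2 = v.1 ^ (q + 1)} = q ^ 3 := by
  classical
  haveI := Fact.mk hp
  have hq1 : 1 ≤ q := hq ▸ Nat.one_le_pow _ _ hp.pos
  have hq2 : 2 ≤ q := by
    rw [hq]; exact Nat.one_lt_pow (by omega) hp.one_lt
  -- characteristic of F is p
  haveI hcharF : CharP F p := by
    haveI := ringChar.charP F
    obtain ⟨n, hrc, hcard⟩ := FiniteField.card F (ringChar F)
    have hdvd : p ∣ ringChar F ^ (n : ℕ) := by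
      rw [← hcard, hF, hq, ← pow_mul]
      exact dvd_pow_self p (by positivity)
    have : p = ringChar F := by
      rcases (Nat.Prime.dvd_of_dvd_pow hp hdvd) with h
      exact ((Nat.prime_dvd_prime_iff_eq hp hrc).mp h)
    rw [this]; exact ringChar.charP F
  -- freshman's dream for exponent q
  have hfrob : ∀ a b : F, (a + b) ^ q = a ^ q + b ^ q := by
    intro a b; rw [hq]; exact add_pow_char_pow a b p m
  -- a ^ (q^2) = a
  have hpowcard : ∀ a : F, a ^ q ^ 2 = a := by
    intro a; rw [← hF]; exact FiniteField.pow_card a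
  -- the additive map f y = y^q + y
  let f : F →+ F :=
    { toFun := fun y => y ^ q + y
      map_zero' := by simp [zero_pow (by omega : q ≠ 0)]
      map_add' := by
        intro a b
        show (a + b) ^ q + (a + b) = (a ^ q + a) + (b ^ q + b)
        rw [hfrob]; ring }
  have hf : ∀ y : F, f y = y ^ q + y := fun _ => rfl
  -- polynomial degree facts
  have hdegXq : (X ^ q : F[X]).degree = (q : WithBot ℕ) := by
    rw [degree_X_pow]
  have hXlt : (X : F[X]).degree < (X ^ q : F[X]).degree := by
    rw [degree_X, hdegXq]; exact_mod_cast hq2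
  have hdeg1 : (X ^ q + X : F[X]).natDegree = q := by
    have := degree_add_eq_left_of_degree_lt hXlt
    rw [hdegXq] at this
    exact natDegree_eq_of_degree_eq_some this
  have hne1 : (X ^ q + X : F[X]) ≠ 0 := by
    intro h; rw [h, natDegree_zero] at hdeg1; omega
  have hdeg2 : (X ^ q - X : F[X]).natDegree = q := by
    have := degree_sub_eq_left_of_degree_lt hXlt
    rw [hdegXq] at this
    exact natDegree_eq_of_degree_eq_some this
  have hne2 : (X ^ q - X : F[X]) ≠ 0 := by
    intro h; rw [h, natDegree_zero] at hdeg2; omega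
  -- bounds on kernel and range
  have hker_le : Nat.card f.ker ≤ q := by
    have e : {a : F // a ∈ f.ker} ≃ {a : F // (X ^ q + X : F[X]).IsRoot a} :=
      Equiv.subtypeEquivRight (fun a => by
        rw [AddMonoidHom.mem_ker, hf, IsRoot.def]
        simp)
    calc Nat.card f.ker = Nat.card {a : F // (X ^ q + X : F[X]).IsRoot a} := Nat.card_congr e
      _ ≤ (X ^ q + X : F[X]).natDegree := aux_card_isRoot_le _ hne1
      _ = q := hdeg1
  -- the set S of elements fixed by x ↦ x^q
  set S : Set F := {c : F | c ^ q = c} with hSdef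
  have hS_le : Nat.card S ≤ q := by
    have e : {a : F // a ∈ S} ≃ {a : F // (X ^ q - X : F[X]).IsRoot a} :=
      Equiv.subtypeEquivRight (fun a => by
        rw [hSdef, Set.mem_setOf_eq, IsRoot.def]
        simp [sub_eq_zero])
    calc Nat.card S = Nat.card {a : F // (X ^ q - X : F[X]).IsRoot a} := Nat.card_congr e
      _ ≤ (X ^ q - X : F[X]).natDegree := aux_card_isRoot_le _ hne2
      _ = q := hdeg2
  have hrange_sub : (f.range : Set F) ⊆ S := by
    rintro c ⟨y, rfl⟩
    show (y ^ q + y) ^ q = y ^ q + y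
    rw [hfrob, ← pow_mul, ← pow_two, hpowcard, add_comm]
  -- product formula
  have hprod : Nat.card f.range * Nat.card f.ker = q ^ 2 := by
    have h1 : Nat.card F = Nat.card (F ⧸ f.ker) * Nat.card f.ker :=
      AddSubgroup.card_eq_card_quotient_mul_card_addSubgroup f.ker
    have h2 : Nat.card (F ⧸ f.ker) = Nat.card f.range :=
      Nat.card_congr (QuotientAddGroup.quotientKerEquivRange f).toEquiv
    rw [h2] at h1
    rw [← h1, Nat.card_eq_fintype_card, hF]
  have hrange_le : Nat.card f.range ≤ q := by
    have h1 : Nat.card f.range = (f.range : Set F).ncard := Nat.card_coe_set_eq _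
    have h2 : Nat.card S = S.ncard := Nat.card_coe_set_eq _
    have : Nat.card f.range ≤ Nat.card S := by
      rw [h1, h2]
      exact Set.ncard_le_ncard hrange_sub (Set.toFinite S)
    omega
  have hker_eq : Nat.card f.ker = q := by
    have h1 : q * q ≤ Nat.card f.range * Nat.card f.ker := by
      rw [hprod, pow_two]
    by_contra h
    have hk : Nat.card f.ker < q := lt_of_le_of_ne hker_le h
    have : Nat.card f.range * Nat.card f.ker < q * q :=
      Nat.mul_lt_mul_of_le_of_lt hrange_le hk (by omega)
    omega
  have hrange_eq : Nat.card f.range = q := by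
    have := hprod
    rw [hker_eq, pow_two] at this
    exact Nat.eq_of_mul_eq_mul_right (by omega) this
  -- S equals the range of f
  have hSeq : (f.range : Set F) = S := by
    apply Set.eq_of_subset_of_ncard_le hrange_sub _ (Set.toFinite S)
    have h1 : Nat.card f.range = (f.range : Set F).ncard := Nat.card_coe_set_eq _
    have h2 : Nat.card S = S.ncard := Nat.card_coe_set_eq _
    rw [← h1, ← h2, hrange_eq]
    exact hS_le
  -- every x^(q+1) is in the range
  have hmem : ∀ x : F, ∃ b : F, f b = x ^ (q + 1) := by
    intro x
    have hxS : x ^ (q + 1) ∈ S := by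
      show (x ^ (q + 1)) ^ q = x ^ (q + 1)
      rw [← pow_mul]
      have : (q + 1) * q = q ^ 2 + q := by ring
      rw [this, pow_add, hpowcard, ← pow_succ']
    rw [← hSeq] at hxS
    exact hxS
  -- each fiber has exactly q elements
  have hfib : ∀ x : F, Nat.card {y : F // y ^ q + y = x ^ (q + 1)} = q := by
    intro x
    obtain ⟨b, hb⟩ := hmem x
    have e : {y : F // y ^ q + y = x ^ (q + 1)} ≃ f.ker :=
      { toFun := fun y => ⟨y.1 - b, by
          rw [AddMonoidHom.mem_ker, map_sub, hb, hf, y.2, sub_self]⟩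
        invFun := fun k => ⟨k.1 + b, by
          have hk : f k.1 = 0 := k.2
          have : f (k.1 + b) = x ^ (q + 1) := by rw [map_add, hk, hb, zero_add]
          rw [← hf]; exact this⟩
        left_inv := fun y => by ext; simp
        right_inv := fun k => by ext; simp }
    rw [Nat.card_congr e, hker_eq]
  -- assemble
  have e2 : {v : F × F // v.2 ^ q + v.2 = v.1 ^ (q + 1)} ≃
      Σ x : F, {y : F // y ^ q + y = x ^ (q + 1)} :=
    { toFun := fun v => ⟨v.1.1, v.1.2, v.2⟩
      invFun := fun s => ⟨(s.1, s.2.1), s.2.2⟩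
      left_inv := fun v => rfl
      right_inv := fun s => rfl }
  rw [Nat.card_congr e2]
  rw [Nat.card_eq_fintype_card, Fintype.card_sigma]
  have : ∀ x : F, Fintype.card {y : F // y ^ q + y = x ^ (q + 1)} = q := by
    intro x; rw [← Nat.card_eq_fintype_card]; exact hfib x
  simp only [this, Finset.sum_const, Finset.card_univ, smul_eq_mul, hF]
  ring
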